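/- arXiv:2208.03082 — 7 statements merged into one kernel-verified Lean document; each statement's English description precedes it below -/
import Mathlib

section
/- If two players' probabilistic preferences A_i and B_i over N options all satisfy A_i + B_i ≤ 1, then there exists an N×N matrix P with nonnegative entries, zero diagonal, and total sum 1, such that the i-th row sum equals A_i and the j-th column sum equals B_j for all i, j. -/
open Finset

private lemma ov_eq (u v x y : ℝ) (huv : u ≤ v) (hxy : x ≤ y) :
    max 0 (min v y - max u x) = max u (min v y) - max u (min v x) := by
  rcases le_total y u with h1 | h1 <;> rcases le_total x u with h2 | h2 <;>
    rcases le_total y v with h3 | h3 <;> rcases le_total x v with h4 | h4 <;>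
    simp [max_def, min_def] <;> split_ifs <;> linarith

private lemma main_construction (N : ℕ) (hN : 0 < N) (A B : ℕ → ℝ)
    (hA0 : ∀ n, 0 ≤ A n) (hB0 : ∀ n, 0 ≤ B n)
    (hA1 : ∑ k ∈ range N, A k = 1) (hB1 : ∑ k ∈ range N, B k = 1)
    (hS : ∀ k < N, A k + B k ≤ 1)
    (hAz : ∀ n, N ≤ n → A n = 0) (hBz : ∀ n, N ≤ n → B n = 0) :
    ∃ P : ℕ → ℕ → ℝ, (∀ i j, 0 ≤ P i j) ∧ (∀ i, P i i = 0) ∧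
      (∀ i < N, ∑ j ∈ range N, P i j = A i) ∧
      (∀ j < N, ∑ i ∈ range N, P i j = B j) := by
  set a : ℕ → ℝ := fun m => ∑ k ∈ range m, A k with ha
  set c : ℕ → ℝ := fun m => ∑ k ∈ range m, B k with hc
  have a_mono : Monotone a := by
    apply monotone_nat_of_le_succ
    intro n
    simp only [ha, sum_range_succ]
    exact le_add_of_nonneg_right (hA0 n)
  have c_mono : Monotone c := by
    apply monotone_nat_of_le_succ
    intro n
    simp only [hc, sum_range_succ]
    exact le_add_of_nonneg_right (hB0 n)
  have a0 : a 0 = 0 := by simp [ha]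
  have c0 : c 0 = 0 := by simp [hc]
  have aN : a N = 1 := hA1
  have cN : c N = 1 := hB1
  have a_nonneg : ∀ m, 0 ≤ a m := fun m => a0 ▸ a_mono (Nat.zero_le m)
  have c_nonneg : ∀ m, 0 ≤ c m := fun m => c0 ▸ c_mono (Nat.zero_le m)
  have a_le : ∀ m, m ≤ N → a m ≤ 1 := fun m hm => aN ▸ a_mono hm
  have c_le : ∀ m, m ≤ N → c m ≤ 1 := fun m hm => cN ▸ c_mono hm
  have astep : ∀ m, a (m + 1) = a m + A m := fun m => sum_range_succ A m
  have cstep : ∀ m, c (m + 1) = c m + B m := fun m => sum_range_succ B m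
  have hne : (range N).Nonempty := ⟨0, mem_range.mpr hN⟩
  set θ : ℝ := (range N).sup' hne (fun k => a (k + 1) - c k) with hθ
  have θ_lb : ∀ k < N, a (k + 1) - c k ≤ θ := fun k hk =>
    le_sup' (fun k => a (k + 1) - c k) (mem_range.mpr hk)
  have θ_nonneg : 0 ≤ θ := by
    have := θ_lb 0 hN
    have h1 : a 1 = A 0 := by rw [astep 0, a0]; ring
    have := hA0 0
    linarith [c0 ▸ this]
  have θ_le1 : θ ≤ 1 := by
    apply sup'_le
    intro k hk
    rw [mem_range] at hk
    have := a_le (k + 1) hk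
    have := c_nonneg k
    linarith
  have θ_ub : ∀ i < N, θ ≤ a i + 1 - c (i + 1) := by
    intro i hi
    apply sup'_le
    intro k hk
    rw [mem_range] at hk
    rcases lt_trichotomy k i with h | h | h
    · have h1 : a (k + 1) ≤ a i := a_mono h
      have h2 : c (i + 1) ≤ 1 := c_le _ hi
      have h3 : 0 ≤ c k := c_nonneg k
      linarith
    · subst h
      have := hS k hk
      rw [astep, cstep]
      linarith
    · have h1 : a (k + 1) ≤ 1 := a_le _ hk
      have h2 : c (i + 1) ≤ c k := c_mono h
      have h3 : 0 ≤ a i := a_nonneg i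
      linarith
  refine ⟨fun i j =>
    max 0 (min (a (i + 1)) (θ + c (j + 1)) - max (a i) (θ + c j)) +
    max 0 (min (a (i + 1) + 1) (θ + c (j + 1)) - max (a i + 1) (θ + c j)),
    ?_, ?_, ?_, ?_⟩
  · intro i j
    exact add_nonneg (le_max_left _ _) (le_max_left _ _)
  · intro i
    dsimp only
    by_cases hi : i < N
    · have h1 : max 0 (min (a (i + 1)) (θ + c (i + 1)) - max (a i) (θ + c i)) = 0 := by
        apply max_eq_left
        have e1 : min (a (i + 1)) (θ + c (i + 1)) ≤ a (i + 1) := min_le_left _ _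
        have e2 : θ + c i ≤ max (a i) (θ + c i) := le_max_right _ _
        have e3 := θ_lb i hi
        linarith
      have h2 : max 0 (min (a (i + 1) + 1) (θ + c (i + 1)) - max (a i + 1) (θ + c i)) = 0 := by
        apply max_eq_left
        have e1 : min (a (i + 1) + 1) (θ + c (i + 1)) ≤ θ + c (i + 1) := min_le_right _ _
        have e2 : a i + 1 ≤ max (a i + 1) (θ + c i) := le_max_left _ _
        have e3 := θ_ub i hi
        linarith
      rw [h1, h2, add_zero]
    · push_neg at hi
      have aconst : ∀ m, N ≤ m → a m = 1 := by
        intro m hm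
        induction m, hm using Nat.le_induction with
        | base => exact aN
        | succ m hm ih => rw [astep, hAz m hm, ih, add_zero]
      have cconst : ∀ m, N ≤ m → c m = 1 := by
        intro m hm
        induction m, hm using Nat.le_induction with
        | base => exact cN
        | succ m hm ih => rw [cstep, hBz m hm, ih, add_zero]
      have e1 : a i = 1 := aconst i hi
      have e2 : a (i + 1) = 1 := aconst _ (le_trans hi (Nat.le_succ i))
      have e3 : c i = 1 := cconst i hi
      have e4 : c (i + 1) = 1 := cconst _ (le_trans hi (Nat.le_succ i))
      rw [e1, e2, e3, e4]
      have h1 : max 0 (min (1:ℝ) (θ + 1) - max 1 (θ + 1)) = 0 := by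
        apply max_eq_left
        have : min (1:ℝ) (θ + 1) ≤ 1 := min_le_left _ _
        have : (1:ℝ) ≤ max 1 (θ + 1) := le_max_left _ _
        linarith [min_le_left (1:ℝ) (θ + 1), le_max_left (1:ℝ) (θ + 1)]
      have h2 : max 0 (min (1 + 1 : ℝ) (θ + 1) - max (1 + 1 : ℝ) (θ + 1)) = 0 := by
        apply max_eq_left
        have e5 : min (1 + 1 : ℝ) (θ + 1) ≤ θ + 1 := min_le_right _ _
        have e6 : (1 + 1 : ℝ) ≤ max (1 + 1 : ℝ) (θ + 1) := le_max_left _ _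
        linarith
      rw [h1, h2, add_zero]
  · -- row sums
    intro i hi
    dsimp only
    set g : ℕ → ℝ := fun m =>
      max (a i) (min (a (i + 1)) (θ + c m)) +
      max (a i + 1) (min (a (i + 1) + 1) (θ + c m)) with hg
    have huv1 : a i ≤ a (i + 1) := a_mono (Nat.le_succ i)
    have hterm : ∀ j : ℕ,
        max 0 (min (a (i + 1)) (θ + c (j + 1)) - max (a i) (θ + c j)) +
        max 0 (min (a (i + 1) + 1) (θ + c (j + 1)) - max (a i + 1) (θ + c j))
        = g (j + 1) - g j := by
      intro j
      have hxy : θ + c j ≤ θ + c (j + 1) := by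
        have := c_mono (Nat.le_succ j); linarith
      rw [ov_eq _ _ _ _ huv1 hxy, ov_eq _ _ _ _ (by linarith) hxy, hg]
      ring
    rw [Finset.sum_congr rfl (fun j _ => hterm j), sum_range_sub g N]
    have hai1 : a (i + 1) ≤ 1 := a_le _ hi
    have hgN : g N = a (i + 1) + (max (a i) (min (a (i + 1)) θ) + 1) := by
      rw [hg]; dsimp only; rw [cN]
      rw [min_eq_left (by linarith), max_eq_right huv1]
      rw [min_add_add_right, max_add_add_right]
    have hg0 : g 0 = max (a i) (min (a (i + 1)) θ) + (a i + 1) := by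
      rw [hg]; dsimp only; rw [c0, add_zero]
      congr 1
      rw [min_eq_right (show θ ≤ a (i + 1) + 1 by linarith [a_nonneg (i + 1)])]
      exact max_eq_left (by linarith [a_nonneg i])
    rw [hgN, hg0, astep]
    ring
  · -- column sums
    intro j hj
    dsimp only
    have hxy : θ + c j ≤ θ + c (j + 1) := by
      have := c_mono (Nat.le_succ j); linarith
    set h : ℕ → ℝ := fun m =>
      max (θ + c j) (min (θ + c (j + 1)) (a m)) +
      max (θ + c j) (min (θ + c (j + 1)) (a m + 1)) with hh
    have hterm : ∀ i : ℕ,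
        max 0 (min (a (i + 1)) (θ + c (j + 1)) - max (a i) (θ + c j)) +
        max 0 (min (a (i + 1) + 1) (θ + c (j + 1)) - max (a i + 1) (θ + c j))
        = h (i + 1) - h i := by
      intro i
      have huv1 : a i ≤ a (i + 1) := a_mono (Nat.le_succ i)
      rw [min_comm (a (i + 1)) (θ + c (j + 1)), max_comm (a i) (θ + c j),
          min_comm (a (i + 1) + 1) (θ + c (j + 1)), max_comm (a i + 1) (θ + c j),
          ov_eq _ _ _ _ hxy huv1, ov_eq _ _ _ _ hxy (by linarith), hh]
      ring
    rw [Finset.sum_congr rfl (fun i _ => hterm i), sum_range_sub h N]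
    have hcj1 : c (j + 1) ≤ 1 := c_le _ hj
    have hx0 : 0 ≤ θ + c j := by linarith [c_nonneg j]
    have hhN : h N = max (θ + c j) (min (θ + c (j + 1)) 1) + (θ + c (j + 1)) := by
      rw [hh]; dsimp only; rw [aN]
      congr 1
      rw [min_eq_left (by linarith), max_eq_right (by linarith)]
    have hh0 : h 0 = (θ + c j) + max (θ + c j) (min (θ + c (j + 1)) 1) := by
      rw [hh]; dsimp only; rw [a0, zero_add]
      congr 1
      rw [min_eq_right (by linarith), max_eq_left hx0]
    rw [hhN, hh0, cstep]
    ring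

/-- If all popularities `A i + B i` are at most 1, there is a joint selection
probability matrix with zero diagonal, nonnegative entries, total sum 1,
row sums `A` and column sums `B`. -/
theorem zero_loss_exists (N : ℕ) (hN : 2 ≤ N) (A B : Fin N → ℝ)
    (hA0 : ∀ i, 0 ≤ A i) (hB0 : ∀ i, 0 ≤ B i)
    (hA1 : ∑ i, A i = 1) (hB1 : ∑ i, B i = 1)
    (hS : ∀ i, A i + B i ≤ 1) :
    ∃ P : Fin N → Fin N → ℝ,
      (∀ i j, 0 ≤ P i j) ∧ (∀ i, P i i = 0) ∧
      (∑ i, ∑ j, P i j = 1) ∧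
      (∀ i, ∑ j, P i j = A i) ∧ (∀ j, ∑ i, P i j = B j) := by
  have hN0 : 0 < N := by omega
  set A' : ℕ → ℝ := fun n => if h : n < N then A ⟨n, h⟩ else 0 with hA'
  set B' : ℕ → ℝ := fun n => if h : n < N then B ⟨n, h⟩ else 0 with hB'
  have hA'eq : ∀ i : Fin N, A' ↑i = A i := fun i => dif_pos i.isLt
  have hB'eq : ∀ i : Fin N, B' ↑i = B i := fun i => dif_pos i.isLt
  obtain ⟨P, hP0, hPd, hProw, hPcol⟩ := main_construction N hN0 A' B'
    (by intro n; rw [hA']; dsimp only; split_ifs with h; exacts [hA0 _, le_refl 0])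
    (by intro n; rw [hB']; dsimp only; split_ifs with h; exacts [hB0 _, le_refl 0])
    (by rw [← Fin.sum_univ_eq_sum_range,
          Finset.sum_congr rfl (fun i _ => hA'eq i)]; exact hA1)
    (by rw [← Fin.sum_univ_eq_sum_range,
          Finset.sum_congr rfl (fun i _ => hB'eq i)]; exact hB1)
    (by intro k hk
        have := hS ⟨k, hk⟩
        rw [hA', hB']; dsimp only; rw [dif_pos hk, dif_pos hk]; exact this)
    (fun n hn => dif_neg (by omega))
    (fun n hn => dif_neg (by omega))
  have hrow : ∀ i : Fin N, ∑ j : Fin N, P ↑i ↑j = A i := by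
    intro i
    rw [Fin.sum_univ_eq_sum_range (fun m => P ↑i m) N]
    exact (hProw ↑i i.isLt).trans (hA'eq i)
  have hcol : ∀ j : Fin N, ∑ i : Fin N, P ↑i ↑j = B j := by
    intro j
    rw [Fin.sum_univ_eq_sum_range (fun m => P m ↑j) N]
    exact (hPcol ↑j j.isLt).trans (hB'eq j)
  exact ⟨fun i j => P ↑i ↑j, fun i j => hP0 ↑i ↑j, fun i => hPd ↑i,
    by rw [Finset.sum_congr rfl (fun i _ => hrow i)]; exact hA1, hrow, hcol⟩
end

section
/- If the popularity of the last option S_N = A_N + B_N is strictly greater than 1, then no joint selection probability matrix (nonnegative, zero diagonal, entries summing to 1) can achieve zero loss; i.e., it is impossible to have simultaneously row sums equal to A and column sums equal to B. -/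
/-- If the popularity of the last option exceeds 1, no joint selection
probability matrix (nonnegative, zero diagonal, total sum 1) has row sums `A`
and column sums `B` simultaneously. -/
theorem no_zero_loss_of_popular (n : ℕ) (A B : Fin (n + 2) → ℝ)
    (hA0 : ∀ i, 0 ≤ A i) (hB0 : ∀ i, 0 ≤ B i)
    (hA1 : ∑ i, A i = 1) (hB1 : ∑ i, B i = 1)
    (hS : 1 < A (Fin.last (n + 1)) + B (Fin.last (n + 1))) :
    ¬ ∃ P : Fin (n + 2) → Fin (n + 2) → ℝ,
        (∀ i j, 0 ≤ P i j) ∧ (∀ i, P i i = 0) ∧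
        (∑ i, ∑ j, P i j = 1) ∧
        (∀ i, ∑ j, P i j = A i) ∧ (∀ j, ∑ i, P i j = B j) := by
  rintro ⟨P, hP0, hPd, hPsum, hrow, hcol⟩
  set N := Fin.last (n + 1) with hN
  have key : A N + B N ≤ 1 := by
    have h1 : ∑ j, P N j = A N := hrow N
    have h2 : ∑ i, P i N = B N := hcol N
    have hsplit : ∑ i, ∑ j, P i j
        = (∑ i ∈ Finset.univ.erase N, ∑ j, P i j) + ∑ j, P N j :=
      (Finset.sum_erase_add _ _ (Finset.mem_univ N)).symm
    have h3 : B N ≤ ∑ i ∈ Finset.univ.erase N, ∑ j, P i j := by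
      have : B N = ∑ i ∈ Finset.univ.erase N, P i N := by
        rw [← h2, ← Finset.sum_erase_add _ _ (Finset.mem_univ N), hPd N, add_zero]
      rw [this]
      exact Finset.sum_le_sum fun i _ =>
        Finset.single_le_sum (fun j _ => hP0 i j) (Finset.mem_univ N)
    calc A N + B N ≤ (∑ i ∈ Finset.univ.erase N, ∑ j, P i j) + ∑ j, P N j := by
          rw [h1]; linarith
      _ = 1 := by rw [← hsplit, hPsum]
  linarith
end

section
/- Suppose S_N = A_N + B_N > 1 and S_N = max_i (A_i + B_i). Define ε = (S_N − 1)/(2(N−1)) and let P̃ have last column entries A_i + ε for i < N, last row entries B_j + ε for j < N, and all other entries (including the diagonal) zero. Then P̃ is a valid joint selection probability matrix (nonnegative entries, zero diagonal, total sum 1) and its loss equals N(S_N − 1)²/(2(N−1)). -/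
/-- The explicit matrix `P̃` (with last column `A i + ε`, last row `B j + ε`,
zeros elsewhere) is a valid joint selection probability matrix and its loss
equals `N (S_N - 1)^2 / (2 (N - 1))`. -/
theorem tilde_P_valid_and_loss (n : ℕ) (A B : Fin (n + 2) → ℝ)
    (hA0 : ∀ i, 0 ≤ A i) (hB0 : ∀ i, 0 ≤ B i)
    (hA1 : ∑ i, A i = 1) (hB1 : ∑ i, B i = 1)
    (hS : 1 < A (Fin.last (n + 1)) + B (Fin.last (n + 1)))
    (hmax : ∀ i, A i + B i ≤ A (Fin.last (n + 1)) + B (Fin.last (n + 1)))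
    (ε : ℝ)
    (hε : ε = (A (Fin.last (n + 1)) + B (Fin.last (n + 1)) - 1) /
      (2 * ((n : ℝ) + 1)))
    (P : Fin (n + 2) → Fin (n + 2) → ℝ)
    (hP : ∀ i j, P i j =
      if i ≠ Fin.last (n + 1) ∧ j = Fin.last (n + 1) then A i + ε
      else if i = Fin.last (n + 1) ∧ j ≠ Fin.last (n + 1) then B j + ε
      else 0) :
    (∀ i j, 0 ≤ P i j) ∧ (∀ i, P i i = 0) ∧ (∑ i, ∑ j, P i j = 1) ∧
    (∑ i, (∑ j, P i j - A i) ^ 2 + ∑ j, (∑ i, P i j - B j) ^ 2 =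
      ((n : ℝ) + 2) * (A (Fin.last (n + 1)) + B (Fin.last (n + 1)) - 1) ^ 2 /
        (2 * ((n : ℝ) + 1))) := by
  set L := Fin.last (n + 1) with hL
  have hnpos : (0:ℝ) < (n:ℝ) + 1 := by positivity
  have hne : ∀ j : Fin (n + 1), j.castSucc ≠ L := fun j => (Fin.castSucc_lt_last j).ne
  have hεpos : 0 ≤ ε := by
    rw [hε]
    apply div_nonneg
    · linarith
    · positivity
  have e2 : A L + B L - 1 = 2 * ((n:ℝ) + 1) * ε := by
    rw [hε]; field_simp
  have hAc : ∑ j : Fin (n + 1), A j.castSucc = 1 - A L := by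
    rw [Fin.sum_univ_castSucc] at hA1; linarith
  have hBc : ∑ j : Fin (n + 1), B j.castSucc = 1 - B L := by
    rw [Fin.sum_univ_castSucc] at hB1; linarith
  -- row sums
  have hrow : ∀ i, i ≠ L → ∑ j, P i j = A i + ε := by
    intro i hi
    rw [Fin.sum_univ_castSucc]
    have h1 : ∀ j : Fin (n + 1), P i j.castSucc = 0 := by
      intro j; rw [hP]; simp [hi, hne j]
    rw [Finset.sum_congr rfl (fun j _ => h1 j)]
    have h2 : P i L = A i + ε := by rw [hP]; simp [hi]
    simp [h2]
    exact h2
  have hrowL : ∑ j, P L j = (1 - B L) + ((n:ℝ) + 1) * ε := by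
    rw [Fin.sum_univ_castSucc]
    have h1 : ∀ j : Fin (n + 1), P L j.castSucc = B j.castSucc + ε := by
      intro j; rw [hP]; simp [hne j]
    rw [Finset.sum_congr rfl (fun j _ => h1 j)]
    have h2 : P L L = 0 := by rw [hP]; simp
    rw [h2, Finset.sum_add_distrib, hBc]
    simp
  have hcol : ∀ j, j ≠ L → ∑ i, P i j = B j + ε := by
    intro j hj
    rw [Fin.sum_univ_castSucc]
    have h1 : ∀ i : Fin (n + 1), P i.castSucc j = 0 := by
      intro i; rw [hP]; simp [hj, hne i]
    rw [Finset.sum_congr rfl (fun i _ => h1 i)]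
    have h2 : P L j = B j + ε := by rw [hP]; simp [hj]
    simp [h2]
    exact h2
  have hcolL : ∑ i, P i L = (1 - A L) + ((n:ℝ) + 1) * ε := by
    rw [Fin.sum_univ_castSucc]
    have h1 : ∀ i : Fin (n + 1), P i.castSucc L = A i.castSucc + ε := by
      intro i; rw [hP]; simp [hne i]
    rw [Finset.sum_congr rfl (fun i _ => h1 i)]
    have h2 : P L L = 0 := by rw [hP]; simp
    rw [h2, Finset.sum_add_distrib, hAc]
    simp
  refine ⟨?_, ?_, ?_, ?_⟩
  · intro i j
    rw [hP]
    split_ifs with h1 h2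
    · have := hA0 i; linarith
    · have := hB0 j; linarith
    · exact le_rfl
  · intro i
    rw [hP]; simp
  · rw [Fin.sum_univ_castSucc]
    rw [Finset.sum_congr rfl (fun i _ => hrow i.castSucc (hne i))]
    rw [hrowL, Finset.sum_add_distrib, hAc]
    simp
    linarith [e2]
  · have e3 : ∀ i : Fin (n + 1), (∑ j, P i.castSucc j - A i.castSucc) ^ 2 = ε ^ 2 := by
      intro i; rw [hrow i.castSucc (hne i)]; ring
    have e4 : ∀ j : Fin (n + 1), (∑ i, P i j.castSucc - B j.castSucc) ^ 2 = ε ^ 2 := by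
      intro j; rw [hcol j.castSucc (hne j)]; ring
    rw [Fin.sum_univ_castSucc (f := fun i => (∑ j, P i j - A i) ^ 2),
        Fin.sum_univ_castSucc (f := fun j => (∑ i, P i j - B j) ^ 2),
        Finset.sum_congr rfl (fun i _ => e3 i),
        Finset.sum_congr rfl (fun j _ => e4 j),
        hrowL, hcolL]
    simp only [Finset.sum_const, Finset.card_univ, Fintype.card_fin, nsmul_eq_mul]
    have hB : (1 - B L) + ((n:ℝ) + 1) * ε - A L = -(((n:ℝ) + 1) * ε) := by linarith [e2]
    have hA : (1 - A L) + ((n:ℝ) + 1) * ε - B L = -(((n:ℝ) + 1) * ε) := by linarith [e2]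
    rw [hB, hA, e2]
    field_simp
    push_cast
    ring
end

section
/- For any joint selection probability matrix P (nonnegative, zero diagonal, total sum 1), if S_N = A_N + B_N > 1 then the loss satisfies L(P) ≥ N(S_N − 1)²/(2(N−1)). -/
/-- Lower bound on the loss of any joint selection probability matrix when the
popularity of the last option exceeds 1. -/
theorem loss_lower_bound (n : ℕ) (A B : Fin (n + 2) → ℝ)
    (hA0 : ∀ i, 0 ≤ A i) (hB0 : ∀ i, 0 ≤ B i)
    (hA1 : ∑ i, A i = 1) (hB1 : ∑ i, B i = 1)
    (hS : 1 < A (Fin.last (n + 1)) + B (Fin.last (n + 1)))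
    (P : Fin (n + 2) → Fin (n + 2) → ℝ)
    (hP0 : ∀ i j, 0 ≤ P i j) (hPd : ∀ i, P i i = 0)
    (hP1 : ∑ i, ∑ j, P i j = 1) :
    ((n : ℝ) + 2) * (A (Fin.last (n + 1)) + B (Fin.last (n + 1)) - 1) ^ 2 /
        (2 * ((n : ℝ) + 1)) ≤
      ∑ i, (∑ j, P i j - A i) ^ 2 + ∑ j, (∑ i, P i j - B j) ^ 2 := by
  set L := Fin.last (n + 1) with hL
  set x : Fin (n + 2) → ℝ := fun i => ∑ j, P i j - A i with hxdef
  set y : Fin (n + 2) → ℝ := fun j => ∑ i, P i j - B j with hydef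
  have hP1' : ∑ j, ∑ i, P i j = 1 := by rw [Finset.sum_comm]; exact hP1
  have hxsum : ∑ i, x i = 0 := by
    simp only [hxdef, Finset.sum_sub_distrib, hP1, hA1]; ring
  have hysum : ∑ j, y j = 0 := by
    simp only [hydef, Finset.sum_sub_distrib, hP1', hB1]; ring
  -- key: row L sum + column L sum ≤ 1
  have hkey : ∑ j, P L j + ∑ i, P i L ≤ 1 := by
    rw [← hP1]
    have h1 : ∑ i, ∑ j, P i j
        = ∑ j, P L j + ∑ i ∈ Finset.univ.erase L, ∑ j, P i j :=
      (Finset.add_sum_erase _ _ (Finset.mem_univ L)).symm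
    have h2 : ∑ i, P i L = P L L + ∑ i ∈ Finset.univ.erase L, P i L :=
      (Finset.add_sum_erase _ _ (Finset.mem_univ L)).symm
    have h3 : ∑ i ∈ Finset.univ.erase L, P i L
        ≤ ∑ i ∈ Finset.univ.erase L, ∑ j, P i j :=
      Finset.sum_le_sum fun i _ =>
        Finset.single_le_sum (fun j _ => hP0 i j) (Finset.mem_univ L)
    rw [h1, h2, hPd L]
    linarith
  have hxyL : x L + y L ≤ 1 - (A L + B L) := by
    simp only [hxdef, hydef]; linarith
  -- erase sums
  have hxer : ∑ i ∈ Finset.univ.erase L, x i = -(x L) := by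
    have := (Finset.add_sum_erase _ x (Finset.mem_univ L)).symm
    rw [hxsum] at this; linarith
  have hyer : ∑ i ∈ Finset.univ.erase L, y i = -(y L) := by
    have := (Finset.add_sum_erase _ y (Finset.mem_univ L)).symm
    rw [hysum] at this; linarith
  have hcard : ((Finset.univ.erase L).card : ℝ) = (n : ℝ) + 1 := by
    rw [Finset.card_erase_of_mem (Finset.mem_univ L)]
    simp [Fintype.card_fin]
  have hx2 : (x L) ^ 2 ≤ ((n : ℝ) + 1) * ∑ i ∈ Finset.univ.erase L, x i ^ 2 := by
    have := sq_sum_le_card_mul_sum_sq (s := Finset.univ.erase L) (f := x)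
    rw [hxer] at this
    push_cast [hcard] at this
    simpa using this
  have hy2 : (y L) ^ 2 ≤ ((n : ℝ) + 1) * ∑ i ∈ Finset.univ.erase L, y i ^ 2 := by
    have := sq_sum_le_card_mul_sum_sq (s := Finset.univ.erase L) (f := y)
    rw [hyer] at this
    push_cast [hcard] at this
    simpa using this
  have hxsplit : ∑ i, x i ^ 2 = x L ^ 2 + ∑ i ∈ Finset.univ.erase L, x i ^ 2 :=
    (Finset.add_sum_erase _ (fun i => x i ^ 2) (Finset.mem_univ L)).symm
  have hysplit : ∑ i, y i ^ 2 = y L ^ 2 + ∑ i ∈ Finset.univ.erase L, y i ^ 2 :=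
    (Finset.add_sum_erase _ (fun i => y i ^ 2) (Finset.mem_univ L)).symm
  have hgoal : (∑ i, (∑ j, P i j - A i) ^ 2 + ∑ j, (∑ i, P i j - B j) ^ 2)
      = ∑ i, x i ^ 2 + ∑ i, y i ^ 2 := rfl
  rw [hgoal, hxsplit, hysplit, div_le_iff₀ (by positivity)]
  have hS' : 0 < A L + B L - 1 := by linarith
  have hsq : (A L + B L - 1) ^ 2 ≤ (x L + y L) ^ 2 := by nlinarith
  nlinarith [hx2, hy2, hsq, sq_nonneg (x L - y L), sq_nonneg (x L + y L)]
end

section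
/- (Pure HOM optimality for N = 3.) Let N = 3 and suppose both players have the same preference A with A_i > 0, ∑ A_i = 1, and 2A_i < 1 for each i. Let θ₁, θ₂, θ₃ be phases with sin((θ_i − θ_j)/2) ≠ 0 for i ≠ j, and choose amplitudes a_i² proportional to sin²((θ_j − θ_k)/2)/(1 − 2A_i) where {i,j,k} = {1,2,3}. Define r_{i,j} = a_i² a_j² sin²((θ_i − θ_j)/2) and p_{i,j} = r_{i,j} / ∑_{k,l} r_{k,l}. Then the row sums of p satisfy ∑_j p_{i,j} = A_i for each i (and by symmetry the column sums also equal A_i), so the loss is zero. -/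
set_option maxHeartbeats 2000000 in
/-- Pure HOM optimality for `N = 3`: with the prescribed amplitude choice,
the row sums of the normalized joint selection matrix equal the common
preference `A`. -/
theorem pure_hom_three_options (A : Fin 3 → ℝ) (θ : Fin 3 → ℝ)
    (hApos : ∀ i, 0 < A i) (hA1 : A 0 + A 1 + A 2 = 1)
    (hAhalf : ∀ i, A i < 1 / 2)
    (hθ : ∀ i j : Fin 3, i ≠ j → Real.sin ((θ i - θ j) / 2) ≠ 0)
    (C : ℝ) (hC : 0 < C) (α : Fin 3 → ℝ)
    (hα0 : α 0 = C * Real.sin ((θ 1 - θ 2) / 2) ^ 2 / (1 - 2 * A 0))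
    (hα1 : α 1 = C * Real.sin ((θ 2 - θ 0) / 2) ^ 2 / (1 - 2 * A 1))
    (hα2 : α 2 = C * Real.sin ((θ 0 - θ 1) / 2) ^ 2 / (1 - 2 * A 2))
    (r : Fin 3 → Fin 3 → ℝ)
    (hr : ∀ i j, r i j = α i * α j * Real.sin ((θ i - θ j) / 2) ^ 2)
    (p : Fin 3 → Fin 3 → ℝ)
    (hp : ∀ i j, p i j = r i j / (∑ k, ∑ l, r k l)) :
    ∀ i, ∑ j, p i j = A i := by
  have hs0 := hθ 1 2 (by decide)
  have hs1 := hθ 2 0 (by decide)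
  have hs2 := hθ 0 1 (by decide)
  set s0 := Real.sin ((θ 1 - θ 2) / 2) with hs0def
  set s1 := Real.sin ((θ 2 - θ 0) / 2) with hs1def
  set s2 := Real.sin ((θ 0 - θ 1) / 2) with hs2def
  have h21 : Real.sin ((θ 2 - θ 1) / 2) = -s0 := by
    rw [hs0def, ← Real.sin_neg]; ring_nf
  have h02 : Real.sin ((θ 0 - θ 2) / 2) = -s1 := by
    rw [hs1def, ← Real.sin_neg]; ring_nf
  have h10 : Real.sin ((θ 1 - θ 0) / 2) = -s2 := by
    rw [hs2def, ← Real.sin_neg]; ring_nf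
  have hd0 : (0:ℝ) < 1 - 2 * A 0 := by have := hAhalf 0; linarith
  have hd1 : (0:ℝ) < 1 - 2 * A 1 := by have := hAhalf 1; linarith
  have hd2 : (0:ℝ) < 1 - 2 * A 2 := by have := hAhalf 2; linarith
  have hd0' : (1:ℝ) - 2 * A 0 ≠ 0 := ne_of_gt hd0
  have hd1' : (1:ℝ) - 2 * A 1 ≠ 0 := ne_of_gt hd1
  have hd2' : (1:ℝ) - 2 * A 2 ≠ 0 := ne_of_gt hd2
  set K := C ^ 2 * s0 ^ 2 * s1 ^ 2 * s2 ^ 2 with hKdef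
  have hK : (0:ℝ) < K := by rw [hKdef]; positivity
  have hr00 : r 0 0 = 0 := by rw [hr]; simp
  have hr11 : r 1 1 = 0 := by rw [hr]; simp
  have hr22 : r 2 2 = 0 := by rw [hr]; simp
  have hr01 : r 0 1 = K / ((1 - 2 * A 0) * (1 - 2 * A 1)) := by
    rw [hr, hα0, hα1, hKdef]; field_simp; ring
  have hr10 : r 1 0 = K / ((1 - 2 * A 0) * (1 - 2 * A 1)) := by
    rw [hr, hα0, hα1, h10, hKdef]; field_simp
  have hr02 : r 0 2 = K / ((1 - 2 * A 0) * (1 - 2 * A 2)) := by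
    rw [hr, hα0, hα2, h02, hKdef]; field_simp
  have hr20 : r 2 0 = K / ((1 - 2 * A 0) * (1 - 2 * A 2)) := by
    rw [hr, hα0, hα2, hKdef]; field_simp; ring
  have hr12 : r 1 2 = K / ((1 - 2 * A 1) * (1 - 2 * A 2)) := by
    rw [hr, hα1, hα2, hKdef]; field_simp; ring
  have hr21 : r 2 1 = K / ((1 - 2 * A 1) * (1 - 2 * A 2)) := by
    rw [hr, hα1, hα2, h21, hKdef]; field_simp
  have hA2 : A 2 = 1 - A 0 - A 1 := by linarith
  have hS : (∑ k, ∑ l, r k l) =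
      2 * K / ((1 - 2 * A 0) * (1 - 2 * A 1) * (1 - 2 * A 2)) := by
    simp only [Fin.sum_univ_three, hr00, hr11, hr22, hr01, hr10, hr02, hr20,
      hr12, hr21]
    field_simp
    rw [hA2]
    ring
  have hSpos : (0:ℝ) < ∑ k, ∑ l, r k l := by rw [hS]; positivity
  intro i
  have key : ∑ j, p i j = (∑ j, r i j) / (∑ k, ∑ l, r k l) := by
    simp only [Fin.sum_univ_three, hp, ← add_div]
  rw [key, div_eq_iff (ne_of_gt hSpos), hS]
  simp only [Fin.sum_univ_three]
  fin_cases i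
  · show r 0 0 + r 0 1 + r 0 2 =
      A 0 * (2 * K / ((1 - 2 * A 0) * (1 - 2 * A 1) * (1 - 2 * A 2)))
    rw [hr00, hr01, hr02]
    field_simp
    rw [hA2]
    ring
  · show r 1 0 + r 1 1 + r 1 2 =
      A 1 * (2 * K / ((1 - 2 * A 0) * (1 - 2 * A 1) * (1 - 2 * A 2)))
    rw [hr10, hr11, hr12]
    field_simp
    rw [hA2]
    ring
  · show r 2 0 + r 2 1 + r 2 2 =
      A 2 * (2 * K / ((1 - 2 * A 0) * (1 - 2 * A 1) * (1 - 2 * A 2)))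
    rw [hr20, hr21, hr22]
    field_simp
    rw [hA2]
    ring
end

section
/- Under the N = 3 Pure HOM amplitude choice, the unnormalized satisfied preference satisfies π̂(1) := r_{1,2} + r_{1,3} = 2T a₁² a₂² a₃² A₁, where T = ∑_i sin²((θ_j − θ_k)/2)/(1 − 2A_i) (sum over cyclic triples). -/
/-- The unnormalized satisfied preference of the first option in the `N = 3`
Pure HOM construction equals `2 T a₁² a₂² a₃² A₁`. -/
theorem pure_hom_unnormalized (A : Fin 3 → ℝ) (θ : Fin 3 → ℝ)
    (hA1 : A 0 + A 1 + A 2 = 1) (hAhalf : ∀ i, A i < 1 / 2)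
    (C : ℝ) (hC : 0 < C) (α : Fin 3 → ℝ)
    (hα0 : α 0 = C * Real.sin ((θ 1 - θ 2) / 2) ^ 2 / (1 - 2 * A 0))
    (hα1 : α 1 = C * Real.sin ((θ 2 - θ 0) / 2) ^ 2 / (1 - 2 * A 1))
    (hα2 : α 2 = C * Real.sin ((θ 0 - θ 1) / 2) ^ 2 / (1 - 2 * A 2))
    (hnorm : α 0 + α 1 + α 2 = 1)
    (r : Fin 3 → Fin 3 → ℝ)
    (hr : ∀ i j, r i j = α i * α j * Real.sin ((θ i - θ j) / 2) ^ 2)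
    (T : ℝ)
    (hT : T = Real.sin ((θ 1 - θ 2) / 2) ^ 2 / (1 - 2 * A 0)
        + Real.sin ((θ 2 - θ 0) / 2) ^ 2 / (1 - 2 * A 1)
        + Real.sin ((θ 0 - θ 1) / 2) ^ 2 / (1 - 2 * A 2)) :
    r 0 1 + r 0 2 = 2 * T * (α 0 * α 1 * α 2) * A 0 := by
  have hC' : C ≠ 0 := ne_of_gt hC
  have hd0 : (1 - 2 * A 0) ≠ 0 := by have := hAhalf 0; intro h; linarith
  have hd1 : (1 - 2 * A 1) ≠ 0 := by have := hAhalf 1; intro h; linarith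
  have hd2 : (1 - 2 * A 2) ≠ 0 := by have := hAhalf 2; intro h; linarith
  have hs2 : Real.sin ((θ 0 - θ 1) / 2) ^ 2 = α 2 * (1 - 2 * A 2) / C := by
    rw [hα2]; field_simp
  have hs1 : Real.sin ((θ 0 - θ 2) / 2) ^ 2 = α 1 * (1 - 2 * A 1) / C := by
    have : Real.sin ((θ 0 - θ 2) / 2) ^ 2 = Real.sin ((θ 2 - θ 0) / 2) ^ 2 := by
      rw [show (θ 0 - θ 2) / 2 = -((θ 2 - θ 0) / 2) by ring, Real.sin_neg]; ring
    rw [this, hα1]; field_simp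
  have hTC : T = 1 / C := by
    have h : C * T = α 0 + α 1 + α 2 := by
      rw [hT, hα0, hα1, hα2]; field_simp
    rw [hnorm] at h
    field_simp
    linarith
  rw [hr, hr, hs1, hs2, hTC]
  field_simp
  linear_combination (-(2 * α 0 * α 1 * α 2)) * hA1
end

section
/- For the usage rate U = ∑_{i,j} r_{i,j} in Pure HOM with symmetric amplitudes a_k = b_k, ∑_k a_k² = 1, we have U = ∑_{i,j} a_i² a_j² sin²((θ_i − θ_j)/2) ≤ 1/2, i.e., at most half of photon pairs can be used for conflict-free decisions. -/
/-- The Pure HOM usage rate with symmetric normalized amplitudes is at most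
one half. -/
theorem usage_rate_le_half (N : ℕ) (a θ : Fin N → ℝ)
    (hnorm : ∑ k, (a k) ^ 2 = 1) :
    ∑ i, ∑ j, (a i) ^ 2 * (a j) ^ 2 * Real.sin ((θ i - θ j) / 2) ^ 2
      ≤ 1 / 2 := by
  have key : ∀ i j : Fin N,
      (a i) ^ 2 * (a j) ^ 2 * Real.sin ((θ i - θ j) / 2) ^ 2
      = (a i ^ 2 * a j ^ 2
          - ((a i ^ 2 * Real.cos (θ i)) * (a j ^ 2 * Real.cos (θ j))
            + (a i ^ 2 * Real.sin (θ i)) * (a j ^ 2 * Real.sin (θ j)))) / 2 := by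
    intro i j
    rw [Real.sin_sq_eq_half_sub, mul_div_cancel₀ _ (two_ne_zero), Real.cos_sub]
    ring
  simp only [key]
  have expand : ∑ i, ∑ j, (a i ^ 2 * a j ^ 2
          - ((a i ^ 2 * Real.cos (θ i)) * (a j ^ 2 * Real.cos (θ j))
            + (a i ^ 2 * Real.sin (θ i)) * (a j ^ 2 * Real.sin (θ j)))) / 2
      = ((∑ k, a k ^ 2) * (∑ k, a k ^ 2)
          - ((∑ k, a k ^ 2 * Real.cos (θ k)) ^ 2
            + (∑ k, a k ^ 2 * Real.sin (θ k)) ^ 2)) / 2 := by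
    simp only [← Finset.sum_div]
    congr 1
    simp only [Finset.sum_sub_distrib, Finset.sum_add_distrib, ← Finset.sum_mul,
      ← Finset.mul_sum, sq]
  rw [expand, hnorm]
  have h1 : 0 ≤ (∑ k, a k ^ 2 * Real.cos (θ k)) ^ 2 + (∑ k, a k ^ 2 * Real.sin (θ k)) ^ 2 :=
    by positivity
  linarith
end
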